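/- An invertible matrix x ∈ GL_N(k) satisfies ᵀx·J·x = J if and only if x is the block diagonal matrix [[1, 0],[0, y]] (blocks of sizes 1 and 2n, in the basis ordering (e₀, e₁,…,eₙ, f₁,…,fₙ)) for some y ∈ Sp_{2n}(k). Consequently the fixed point group G^θ = {x ∈ GL_N(k) : θ(x) = x} is isomorphic to Sp_{2n}(k) via y ↦ [[1,0],[0,y]]. -/

import Mathlib

open Matrix

/-- The Gram matrix `J' = [[0, 1ₙ], [1ₙ, 0]]` of the symplectic form on `k^{2n}`. -/
def Jsp (k : Type*) [Field k] (n : ℕ) : Matrix (Fin n ⊕ Fin n) (Fin n ⊕ Fin n) k :=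
  Matrix.fromBlocks 0 1 1 0

/-- The `N × N` matrix `J = [[1,0,0],[0,0,1ₙ],[0,1ₙ,0]]`, `N = 2n+1`, rows/columns indexed by
the ordered basis `(e₀, e₁,…,eₙ, f₁,…,fₙ)`, encoded as `Unit ⊕ (Fin n ⊕ Fin n)`. -/
def JN (k : Type*) [Field k] (n : ℕ) :
    Matrix (Unit ⊕ (Fin n ⊕ Fin n)) (Unit ⊕ (Fin n ⊕ Fin n)) k :=
  Matrix.fromBlocks 1 0 0 (Jsp k n)

namespace Stmt3Aux

variable {k : Type} [Field k] {n : ℕ}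

lemma jsp_sq : Jsp k n * Jsp k n = 1 := by
  simp [Jsp, Matrix.fromBlocks_multiply, ← Matrix.fromBlocks_one]

lemma jn_sq : JN k n * JN k n = 1 := by
  simp [JN, Matrix.fromBlocks_multiply, jsp_sq, ← Matrix.fromBlocks_one]

lemma jn_inv : (JN k n)⁻¹ = JN k n := Matrix.inv_eq_right_inv jn_sq

lemma jsp_diag (j : Fin n ⊕ Fin n) : Jsp k n j j = 0 := by
  cases j <;> simp [Jsp]

lemma diag_zero [CharP k 2] {m : Type*} [Fintype m] (M : Matrix (Fin n ⊕ Fin n) m k)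
    (j : m) : (Mᵀ * Jsp k n * M) j j = 0 := by
  have h1 : ∀ a : Fin n ⊕ Fin n, (Jsp k n * M) a j = M a.swap j := by
    intro a
    rw [Matrix.mul_apply, Fintype.sum_sum_type]
    cases a with
    | inl i => simp [Jsp, Matrix.one_apply]
    | inr i => simp [Jsp, Matrix.one_apply]
  rw [Matrix.mul_assoc, Matrix.mul_apply, Fintype.sum_sum_type]
  simp only [Matrix.transpose_apply, h1, Sum.swap_inl, Sum.swap_inr]
  have hs : ∑ i, M (Sum.inr i) j * M (Sum.inl i) j
      = ∑ i, M (Sum.inl i) j * M (Sum.inr i) j :=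
    Finset.sum_congr rfl fun i _ => mul_comm _ _
  rw [hs]
  exact CharTwo.add_self_eq_zero _

lemma backward (y : Matrix (Fin n ⊕ Fin n) (Fin n ⊕ Fin n) k)
    (hy : yᵀ * Jsp k n * y = Jsp k n) :
    (Matrix.fromBlocks (1 : Matrix Unit Unit k) 0 0 y)ᵀ * JN k n *
      Matrix.fromBlocks (1 : Matrix Unit Unit k) 0 0 y = JN k n := by
  have h : (Matrix.fromBlocks (1 : Matrix Unit Unit k) 0 0 y)ᵀ * JN k n *
      Matrix.fromBlocks (1 : Matrix Unit Unit k) 0 0 y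
      = Matrix.fromBlocks (1 : Matrix Unit Unit k) 0 0 (yᵀ * Jsp k n * y) := by
    simp [JN, Matrix.fromBlocks_transpose, Matrix.fromBlocks_multiply, Matrix.mul_assoc]
  rw [h, hy]
  rfl

lemma forward [CharP k 2] (x : Matrix (Unit ⊕ (Fin n ⊕ Fin n)) (Unit ⊕ (Fin n ⊕ Fin n)) k)
    (h : xᵀ * JN k n * x = JN k n) :
    ∃ y : Matrix (Fin n ⊕ Fin n) (Fin n ⊕ Fin n) k,
      IsUnit y ∧ yᵀ * Jsp k n * y = Jsp k n ∧
      x = Matrix.fromBlocks (1 : Matrix Unit Unit k) 0 0 y := by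
  set A := x.toBlocks₁₁ with hA
  set B := x.toBlocks₁₂ with hB
  set C := x.toBlocks₂₁ with hC
  set D := x.toBlocks₂₂ with hD
  have hx : x = Matrix.fromBlocks A B C D := (Matrix.fromBlocks_toBlocks x).symm
  rw [hx] at h
  simp only [JN, Matrix.fromBlocks_transpose, Matrix.fromBlocks_multiply, Matrix.mul_one,
    Matrix.mul_zero, Matrix.zero_mul, Matrix.one_mul, add_zero, zero_add] at h
  rw [Matrix.fromBlocks_inj] at h
  obtain ⟨e1, e2, _e3, e4⟩ := h
  -- B = 0
  have hB0 : B = 0 := by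
    ext u j
    have h4 := congrFun (congrFun e4 j) j
    rw [Matrix.add_apply, diag_zero D j, add_zero, jsp_diag] at h4
    rw [Matrix.mul_apply] at h4
    simp only [Finset.univ_unique, Finset.sum_singleton, Matrix.transpose_apply] at h4
    have : B default j = 0 := mul_self_eq_zero.mp h4
    simpa [Subsingleton.elim u default] using this
  rw [hB0] at e2 e4
  simp only [Matrix.transpose_zero, Matrix.zero_mul, Matrix.mul_zero, zero_add,
    add_zero] at e2 e4
  -- D is a unit
  have hDunit : IsUnit D := by
    have h1 : (Jsp k n * Dᵀ * Jsp k n) * D = 1 := by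
      calc (Jsp k n * Dᵀ * Jsp k n) * D = Jsp k n * (Dᵀ * Jsp k n * D) := by
            simp only [Matrix.mul_assoc]
        _ = 1 := by rw [e4, jsp_sq]
    exact (Matrix.isUnit_iff_isUnit_det D).mpr (Matrix.isUnit_det_of_left_inverse h1)
  -- C = 0
  have hC0 : C = 0 := by
    have hDdet : IsUnit D.det := (Matrix.isUnit_iff_isUnit_det D).mp hDunit
    have hD1 : D * D⁻¹ = 1 := Matrix.mul_nonsing_inv D hDdet
    have hCT : Cᵀ = 0 := by
      have key : Cᵀ * Jsp k n * D * (D⁻¹ * Jsp k n) = Cᵀ := by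
        rw [Matrix.mul_assoc (Cᵀ * Jsp k n) D (D⁻¹ * Jsp k n),
          ← Matrix.mul_assoc D D⁻¹ (Jsp k n), hD1, Matrix.one_mul,
          Matrix.mul_assoc Cᵀ (Jsp k n) (Jsp k n), jsp_sq, Matrix.mul_one]
      rw [← key, e2, Matrix.zero_mul]
    exact Matrix.transpose_eq_zero.mp hCT
  rw [hC0] at e1
  simp only [Matrix.transpose_zero, Matrix.zero_mul, Matrix.mul_zero, add_zero] at e1
  -- A = 1
  have hA1 : A = 1 := by
    have ha := congrFun (congrFun e1 default) default
    rw [Matrix.mul_apply] at ha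
    simp only [Finset.univ_unique, Finset.sum_singleton, Matrix.transpose_apply,
      Matrix.one_apply_eq] at ha
    have ha1 : A default default = 1 := by
      rcases mul_self_eq_one_iff.mp ha with h | h
      · exact h
      · rw [h]; exact (CharTwo.neg_eq 1)
    ext u v
    rw [Subsingleton.elim u default, Subsingleton.elim v default, ha1, Matrix.one_apply_eq]
  exact ⟨D, hDunit, e4, by rw [hx, hA1, hB0, hC0]⟩

lemma theta_iff (x : Matrix (Unit ⊕ (Fin n ⊕ Fin n)) (Unit ⊕ (Fin n ⊕ Fin n)) k)
    (hx : IsUnit x) :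
    (JN k n)⁻¹ * (xᵀ)⁻¹ * JN k n = x ↔ xᵀ * JN k n * x = JN k n := by
  have hxt : IsUnit (xᵀ).det := by
    rw [Matrix.det_transpose]; exact (Matrix.isUnit_iff_isUnit_det x).mp hx
  have h1 : xᵀ * (xᵀ)⁻¹ = 1 := Matrix.mul_nonsing_inv _ hxt
  have h2 : (xᵀ)⁻¹ * xᵀ = 1 := Matrix.nonsing_inv_mul _ hxt
  rw [jn_inv]
  constructor
  · intro h
    have hrw : xᵀ * JN k n * x = xᵀ * JN k n * (JN k n * (xᵀ)⁻¹ * JN k n) := by rw [h]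
    rw [hrw, ← Matrix.mul_assoc, ← Matrix.mul_assoc,
      Matrix.mul_assoc xᵀ (JN k n) (JN k n), jn_sq, Matrix.mul_one, h1, Matrix.one_mul]
  · intro h
    have key : (xᵀ)⁻¹ * JN k n = JN k n * x := by
      calc (xᵀ)⁻¹ * JN k n = (xᵀ)⁻¹ * (xᵀ * JN k n * x) := by rw [h]
        _ = ((xᵀ)⁻¹ * xᵀ) * (JN k n * x) := by simp only [Matrix.mul_assoc]
        _ = JN k n * x := by rw [h2, Matrix.one_mul]
    rw [Matrix.mul_assoc, key, ← Matrix.mul_assoc, jn_sq, Matrix.one_mul]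

lemma block_unit (y : Matrix (Fin n ⊕ Fin n) (Fin n ⊕ Fin n) k) (hy : IsUnit y) :
    IsUnit (Matrix.fromBlocks (1 : Matrix Unit Unit k) 0 0 y) := by
  rw [Matrix.isUnit_iff_isUnit_det, Matrix.det_fromBlocks_zero₂₁, Matrix.det_one, one_mul]
  exact (Matrix.isUnit_iff_isUnit_det y).mp hy

end Stmt3Aux

/-- In characteristic 2 and odd size `N = 2n+1`, an invertible `x` satisfies
`xᵀ J x = J` iff `x = [[1,0],[0,y]]` for some `y ∈ Sp_{2n}(k)`; consequently the fixed point
group `G^θ = {x : θ(x) = x}` is isomorphic to `Sp_{2n}(k)` via `y ↦ [[1,0],[0,y]]`. -/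
theorem stmt_3 (k : Type) [Field k] [IsAlgClosed k] [CharP k 2] (n : ℕ) (hn : 1 ≤ n) :
    (∀ x : Matrix (Unit ⊕ (Fin n ⊕ Fin n)) (Unit ⊕ (Fin n ⊕ Fin n)) k, IsUnit x →
      (xᵀ * JN k n * x = JN k n ↔
        ∃ y : Matrix (Fin n ⊕ Fin n) (Fin n ⊕ Fin n) k,
          IsUnit y ∧ yᵀ * Jsp k n * y = Jsp k n ∧
          x = Matrix.fromBlocks (1 : Matrix Unit Unit k) 0 0 y)) ∧
    Set.BijOn (fun y : Matrix (Fin n ⊕ Fin n) (Fin n ⊕ Fin n) k =>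
        Matrix.fromBlocks (1 : Matrix Unit Unit k) 0 0 y)
      {y : Matrix (Fin n ⊕ Fin n) (Fin n ⊕ Fin n) k |
        IsUnit y ∧ yᵀ * Jsp k n * y = Jsp k n}
      {x : Matrix (Unit ⊕ (Fin n ⊕ Fin n)) (Unit ⊕ (Fin n ⊕ Fin n)) k |
        IsUnit x ∧ (JN k n)⁻¹ * (xᵀ)⁻¹ * JN k n = x} ∧
    ∀ y₁ y₂ : Matrix (Fin n ⊕ Fin n) (Fin n ⊕ Fin n) k,
      Matrix.fromBlocks (1 : Matrix Unit Unit k) 0 0 (y₁ * y₂) =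
        Matrix.fromBlocks (1 : Matrix Unit Unit k) 0 0 y₁ *
          Matrix.fromBlocks (1 : Matrix Unit Unit k) 0 0 y₂ := by
  refine ⟨?_, ⟨?_, ?_, ?_⟩, ?_⟩
  · intro x _hx
    constructor
    · exact Stmt3Aux.forward x
    · rintro ⟨y, _hy, hsp, rfl⟩
      exact Stmt3Aux.backward y hsp
  · -- MapsTo
    rintro y ⟨hyu, hysp⟩
    have hu := Stmt3Aux.block_unit y hyu
    exact ⟨hu, (Stmt3Aux.theta_iff _ hu).mpr (Stmt3Aux.backward y hysp)⟩
  · -- InjOn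
    rintro y₁ _ y₂ _ h
    have := congrArg Matrix.toBlocks₂₂ h
    simpa [Matrix.toBlocks_fromBlocks₂₂] using this
  · -- SurjOn
    rintro x ⟨hxu, hθ⟩
    obtain ⟨y, hyu, hysp, rfl⟩ :=
      Stmt3Aux.forward x ((Stmt3Aux.theta_iff x hxu).mp hθ)
    exact ⟨y, ⟨hyu, hysp⟩, rfl⟩
  · intro y₁ y₂
    simp [Matrix.fromBlocks_multiply]
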